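/- arXiv:1711.08409 — 3 statements merged into one kernel-verified Lean document; each statement's English description precedes it below -/
import Mathlib

section
/- If A is a simple pseudo-hoop, then for all x, y ∈ A, y → x = x implies x = 1 or y = 1. -/
universe u v

class PseudoHoop (A : Type u) extends One A, Mul A where
  rimp : A → A → A
  limp : A → A → A
  mul_one' : ∀ x : A, x * 1 = x
  one_mul' : ∀ x : A, 1 * x = x
  rimp_self : ∀ x : A, rimp x x = 1
  limp_self : ∀ x : A, limp x x = 1
  mul_rimp : ∀ x y z : A, rimp (x * y) z = rimp x (rimp y z)
  mul_limp : ∀ x y z : A, limp (x * y) z = limp y (limp x z)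
  div₁ : ∀ x y : A, (rimp x y) * x = (rimp y x) * y
  div₂ : ∀ x y : A, (rimp x y) * x = x * (limp x y)
  div₃ : ∀ x y : A, x * (limp x y) = y * (limp y x)

namespace PseudoHoop

/-- The order on a pseudo-hoop: `x ≤ y` iff `x → y = 1`. -/
def ple {A : Type u} [PseudoHoop A] (x y : A) : Prop := rimp x y = 1

/-- The meet `x ∧ y = (x → y) ⊙ x`. -/
def meet {A : Type u} [PseudoHoop A] (x y : A) : A := (rimp x y) * x

/-- `x ∨₁ y = (x → y) ⇝ y`. -/
def join₁ {A : Type u} [PseudoHoop A] (x y : A) : A := limp (rimp x y) y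

/-- `x ∨₂ y = (x ⇝ y) → y`. -/
def join₂ {A : Type u} [PseudoHoop A] (x y : A) : A := rimp (limp x y) y

/-- Iterated implication: `x →⁰ y = y`, `x →ⁿ⁺¹ y = x → (x →ⁿ y)`. -/
def rimpPow {A : Type u} [PseudoHoop A] (x : A) : ℕ → A → A
  | 0, y => y
  | n + 1, y => rimp x (rimpPow x n y)

/-- A filter of a pseudo-hoop. -/
structure IsFilter {A : Type u} [PseudoHoop A] (F : Set A) : Prop where
  nonempty : F.Nonempty
  mul_mem : ∀ {x y : A}, x ∈ F → y ∈ F → x * y ∈ F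
  upward : ∀ {x y : A}, x ∈ F → ple x y → y ∈ F

/-- A normal filter: `x → y ∈ F` iff `x ⇝ y ∈ F`. -/
def IsNormalFilter {A : Type u} [PseudoHoop A] (F : Set A) : Prop :=
  IsFilter F ∧ ∀ x y : A, rimp x y ∈ F ↔ limp x y ∈ F

def IsProper {A : Type u} [PseudoHoop A] (F : Set A) : Prop := F ≠ Set.univ

/-- A pseudo-hoop is simple if `{1}` is its unique proper filter. -/
def IsSimple (A : Type u) [PseudoHoop A] : Prop :=
  ∀ F : Set A, IsFilter F → IsProper F → F = {1}

/-- A pseudo-hoop is Wajsberg if `x ∨₁ y = y ∨₁ x` and `x ∨₂ y = y ∨₂ x`. -/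
def IsWajsberg (A : Type u) [PseudoHoop A] : Prop :=
  ∀ x y : A, join₁ x y = join₁ y x ∧ join₂ x y = join₂ y x

/-- A fantastic filter. -/
def IsFantasticFilter {A : Type u} [PseudoHoop A] (F : Set A) : Prop :=
  IsFilter F ∧ ∀ x y : A,
    (rimp y x ∈ F → rimp (join₁ x y) x ∈ F) ∧
    (limp y x ∈ F → limp (join₂ x y) x ∈ F)

def IS₂ {A : Type u} [PseudoHoop A] (μ : A → A) : Prop :=
  ∀ x y : A, μ (x * y) = μ x * μ (limp x (x * y)) ∧
    μ (x * y) = μ (rimp y (x * y)) * μ y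

def IS₃ {A : Type u} [PseudoHoop A] (μ : A → A) : Prop :=
  ∀ x y : A, μ (μ x * μ y) = μ x * μ y

def IS₄ {A : Type u} [PseudoHoop A] (μ : A → A) : Prop :=
  ∀ x y : A, μ (rimp (μ x) (μ y)) = rimp (μ x) (μ y) ∧
    μ (limp (μ x) (μ y)) = limp (μ x) (μ y)

/-- Type I state operator. -/
def IsStateI {A : Type u} [PseudoHoop A] (μ : A → A) : Prop :=
  (∀ x y : A, μ (rimp x y) = rimp (μ (join₁ x y)) (μ y) ∧
      μ (limp x y) = limp (μ (join₂ x y)) (μ y)) ∧ IS₂ μ ∧ IS₃ μ ∧ IS₄ μ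

/-- Type II state operator. -/
def IsStateII {A : Type u} [PseudoHoop A] (μ : A → A) : Prop :=
  (∀ x y : A, μ (rimp x y) = rimp (μ (join₁ y x)) (μ y) ∧
      μ (limp x y) = limp (μ (join₂ y x)) (μ y)) ∧ IS₂ μ ∧ IS₃ μ ∧ IS₄ μ

/-- Type III state operator. -/
def IsStateIII {A : Type u} [PseudoHoop A] (μ : A → A) : Prop :=
  (∀ x y : A, μ (rimp x y) = rimp (μ x) (μ (meet x y)) ∧
      μ (limp x y) = limp (μ x) (μ (meet x y))) ∧ IS₂ μ ∧ IS₃ μ ∧ IS₄ μ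

end PseudoHoop

open PseudoHoop

/-- A bounded pseudo-hoop: a pseudo-hoop with a least element `0`. -/
class BoundedPseudoHoop (A : Type u) extends PseudoHoop A, Zero A where
  zero_le : ∀ x : A, rimp 0 x = 1

namespace BoundedPseudoHoop

/-- `x⁻ = x → 0`. -/
def negr {A : Type u} [BoundedPseudoHoop A] (x : A) : A := rimp x 0

/-- `x∼ = x ⇝ 0`. -/
def negl {A : Type u} [BoundedPseudoHoop A] (x : A) : A := limp x 0

/-- A bounded pseudo-hoop is good if `x⁻∼ = x∼⁻` for all `x`. -/
def IsGood (A : Type u) [BoundedPseudoHoop A] : Prop :=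
  ∀ x : A, negl (negr x) = negr (negl x)

/-- A bounded pseudo-hoop is involutive if `x⁻∼ = x∼⁻ = x` for all `x`. -/
def IsInvolutive (A : Type u) [BoundedPseudoHoop A] : Prop :=
  ∀ x : A, negl (negr x) = x ∧ negr (negl x) = x

/-- The set of dense elements. -/
def Den (A : Type u) [BoundedPseudoHoop A] : Set A :=
  {x : A | negl (negr x) = 1}

/-- An involutive filter: `x⁻∼ → x ∈ F` and `x∼⁻ ⇝ x ∈ F` for all `x`. -/
def IsInvolutiveFilter {A : Type u} [BoundedPseudoHoop A] (F : Set A) : Prop :=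
  IsFilter F ∧ ∀ x : A, rimp (negl (negr x)) x ∈ F ∧ limp (negr (negl x)) x ∈ F

end BoundedPseudoHoop

open BoundedPseudoHoop

section Aux

variable {A : Type u} [PseudoHoop A]

lemma rimp_antisymm {a b : A} (h1 : rimp a b = 1) (h2 : rimp b a = 1) : a = b := by
  have hd := div₁ a b
  rw [h1, h2, one_mul', one_mul'] at hd
  exact hd

lemma limp_antisymm {a b : A} (h1 : limp a b = 1) (h2 : limp b a = 1) : a = b := by
  have hd := div₃ a b
  rw [h1, h2, mul_one', mul_one'] at hd
  exact hd

lemma one_rimp_rimp (a b : A) : rimp 1 (rimp a b) = rimp a b := by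
  have := mul_rimp 1 a b
  rw [one_mul'] at this
  exact this.symm

lemma one_limp_limp (a b : A) : limp 1 (limp a b) = limp a b := by
  have := mul_limp a 1 b
  rw [mul_one'] at this
  exact this.symm

lemma one_rimp_eq_mul (a : A) : rimp 1 a = (rimp a 1) * a := by
  have hd := div₁ a 1
  rw [mul_one'] at hd
  exact hd.symm

lemma one_limp_eq_mul (a : A) : limp 1 a = a * (limp a 1) := by
  have hd := div₃ 1 a
  rwa [one_mul'] at hd

lemma rimp_one_rimp_one (a : A) : rimp (rimp 1 a) 1 = 1 := by
  rw [one_rimp_eq_mul, mul_rimp, rimp_self]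

lemma limp_one_limp_one (a : A) : limp (limp 1 a) 1 = 1 := by
  rw [one_limp_eq_mul, mul_limp, limp_self]

lemma rimp_form_le_one (a b : A) : rimp (rimp a b) 1 = 1 := by
  have h := one_rimp_rimp a b
  calc rimp (rimp a b) 1 = rimp (rimp 1 (rimp a b)) 1 := by rw [h]
    _ = 1 := rimp_one_rimp_one _

lemma limp_form_le_one (a b : A) : limp (limp a b) 1 = 1 := by
  have h := one_limp_limp a b
  calc limp (limp a b) 1 = limp (limp 1 (limp a b)) 1 := by rw [h]
    _ = 1 := limp_one_limp_one _

lemma rimp_one_self (a : A) : rimp a (rimp 1 a) = 1 := by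
  have := mul_rimp a 1 a
  rw [mul_one'] at this
  rw [← this, rimp_self]

lemma limp_one_self (a : A) : limp a (limp 1 a) = 1 := by
  have := mul_limp 1 a a
  rw [one_mul'] at this
  rw [← this, limp_self]

lemma one_rimp (a : A) : rimp 1 a = a := by
  apply rimp_antisymm
  · rw [one_rimp_eq_mul, mul_rimp, rimp_self, rimp_form_le_one]
  · exact rimp_one_self a

lemma one_limp (a : A) : limp 1 a = a := by
  apply limp_antisymm
  · rw [one_limp_eq_mul, mul_limp, limp_self, limp_form_le_one]
  · exact limp_one_self a

lemma rimp_one (a : A) : rimp a 1 = 1 := by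
  conv_lhs => rw [← one_rimp a]
  exact rimp_one_rimp_one a

lemma limp_one (a : A) : limp a 1 = 1 := by
  conv_lhs => rw [← one_limp a]
  exact limp_one_limp_one a

lemma rimp_of_limp {a b : A} (h : limp a b = 1) : rimp a b = 1 := by
  have hd := div₂ a b
  rw [h, mul_one'] at hd
  calc rimp a b = rimp ((rimp a b) * a) b := by rw [hd]
    _ = rimp (rimp a b) (rimp a b) := mul_rimp _ _ _
    _ = 1 := rimp_self _

lemma rimp_trans {a b c : A} (h1 : rimp a b = 1) (h2 : rimp b c = 1) :
    rimp a c = 1 := by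
  have ha : a = (rimp b a) * b := by
    have hd := div₁ a b
    rw [h1, one_mul'] at hd
    exact hd
  calc rimp a c = rimp ((rimp b a) * b) c := by rw [← ha]
    _ = rimp (rimp b a) (rimp b c) := mul_rimp _ _ _
    _ = rimp (rimp b a) 1 := by rw [h2]
    _ = 1 := rimp_one _

lemma mul_le_left (a b : A) : rimp (a * b) a = 1 := by
  apply rimp_of_limp
  rw [mul_limp, limp_self, limp_one]

lemma le_rimp_mul (a b : A) : rimp a (rimp b (a * b)) = 1 := by
  rw [← mul_rimp, rimp_self]

lemma rimp_antitone {q b : A} (h : rimp q b = 1) (w : A) :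
    rimp (rimp b w) (rimp q w) = 1 := by
  have hq : q = (rimp b q) * b := by
    have hd := div₁ q b
    rw [h, one_mul'] at hd
    exact hd
  calc rimp (rimp b w) (rimp q w)
      = rimp ((rimp b w) * q) w := (mul_rimp _ _ _).symm
    _ = rimp ((rimp b w) * ((rimp b q) * b)) w := by rw [← hq]
    _ = rimp (rimp b w) (rimp (rimp b q) (rimp b w)) := by
        rw [mul_rimp, mul_rimp]
    _ = rimp ((rimp b w) * (rimp b q)) (rimp b w) := (mul_rimp _ _ _).symm
    _ = 1 := mul_le_left _ _

lemma mul_mono_right {q b : A} (h : rimp q b = 1) (p : A) :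
    rimp (p * q) (p * b) = 1 := by
  rw [mul_rimp]
  exact rimp_trans (le_rimp_mul p b) (rimp_antitone h (p * b))

lemma mul_mono_left {p a : A} (h : rimp p a = 1) (q : A) :
    rimp (p * q) (a * q) = 1 := by
  rw [mul_rimp]
  exact rimp_trans h (le_rimp_mul a q)

lemma ph_mul_le_mul {p a q b : A} (h1 : rimp p a = 1) (h2 : rimp q b = 1) :
    rimp (p * q) (a * b) = 1 :=
  rimp_trans (mul_mono_left h1 q) (mul_mono_right h2 a)

lemma rimp_mono {z w : A} (h : rimp z w = 1) (y : A) :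
    rimp (rimp y z) (rimp y w) = 1 := by
  rw [← mul_rimp]
  have h1 : rimp ((rimp y z) * y) z = 1 := by rw [mul_rimp, rimp_self]
  exact rimp_trans h1 h

lemma rimpPow_mono {z w : A} (h : rimp z w = 1) (y : A) :
    ∀ n, rimp (rimpPow y n z) (rimpPow y n w) = 1
  | 0 => h
  | n + 1 => rimp_mono (rimpPow_mono h y n) y

lemma rimpPow_add (y z : A) : ∀ m n, rimpPow y m (rimpPow y n z) = rimpPow y (m + n) z
  | 0, n => by simp [rimpPow]
  | m + 1, n => by
      show rimp y (rimpPow y m (rimpPow y n z)) = rimpPow y (m + 1 + n) z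
      rw [rimpPow_add y z m n]
      have : m + 1 + n = (m + n) + 1 := by omega
      rw [this]
      rfl

/-- Iterated product `y ⊙ (y ⊙ ⋯ ⊙ 1)`. -/
def pw (y : A) : ℕ → A
  | 0 => 1
  | n + 1 => y * pw y n

lemma rimp_pw (y z : A) : ∀ n, rimp (pw y n) z = rimpPow y n z
  | 0 => one_rimp z
  | n + 1 => by
      show rimp (y * pw y n) z = rimp y (rimpPow y n z)
      rw [mul_rimp, rimp_pw y z n]

lemma rimpPow_fix {x y : A} (hyx : rimp y x = x) : ∀ n, rimpPow y n x = x
  | 0 => rfl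
  | n + 1 => by
      show rimp y (rimpPow y n x) = x
      rw [rimpPow_fix hyx n, hyx]

end Aux

theorem stmt4 {A : Type u} [PseudoHoop A] (h : IsSimple A) (x y : A)
    (hyx : rimp y x = x) : x = 1 ∨ y = 1 := by
  set F : Set A := {z | ∃ n, rimpPow y n z = 1} with hF
  have hFilter : IsFilter F := by
    constructor
    · exact ⟨y, 1, by show rimp y (rimpPow y 0 y) = 1; exact rimp_self y⟩
    · rintro a b ⟨m, hm⟩ ⟨n, hn⟩
      refine ⟨m + n, ?_⟩
      have hma : rimp (pw y m) a = 1 := by rw [rimp_pw]; exact hm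
      have hnb : rimp (pw y n) b = 1 := by rw [rimp_pw]; exact hn
      have hmul := ph_mul_le_mul hma hnb
      rwa [mul_rimp, rimp_pw, rimp_pw, rimpPow_add] at hmul
    · rintro a b ⟨n, hn⟩ hab
      refine ⟨n, ?_⟩
      have := rimpPow_mono hab y n
      rw [hn, one_rimp] at this
      exact this
  by_cases hProp : IsProper F
  · right
    have hone := h F hFilter hProp
    have hy : y ∈ F := ⟨1, by show rimp y (rimpPow y 0 y) = 1; exact rimp_self y⟩
    rw [hone] at hy
    exact hy
  · left
    have hU : F = Set.univ := by
      by_contra hne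
      exact hProp hne
    have hx : x ∈ F := by rw [hU]; trivial
    obtain ⟨n, hn⟩ := hx
    rw [rimpPow_fix hyx n] at hn
    exact hn
end

section
/- In a Wajsberg pseudo-hoop A, for all x, y, z ∈ A: (x ∨ y) → z = (x → z) ∧ (y → z) and (x ∨ y) ⇝ z = (x ⇝ z) ∧ (y ⇝ z), where x ∨ y = (x→y)⇝y and x ∧ y = (x→y)⊙x. -/
universe u v

open PseudoHoop

open BoundedPseudoHoop


section AuxLemmas
open PseudoHoop
variable {A : Type u} [PseudoHoop A]

lemma ph_antisymm {x y : A} (h1 : rimp x y = 1) (h2 : rimp y x = 1) : x = y := by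
  have hd := div₁ x y
  rw [h1, h2, one_mul', one_mul'] at hd
  exact hd

lemma ph_B (y : A) : rimp (1:A) y = (rimp y 1) * y := by
  have hd := div₁ y 1
  rw [mul_one'] at hd
  exact hd.symm

lemma ph_ff (a : A) : rimp (rimp a (1:A)) 1 = 1 := by
  have hA : rimp a (1:A) = rimp (1:A) (rimp a 1) := by rw [← mul_rimp, one_mul']
  have hB := hA.trans (ph_B (rimp a 1))
  rw [hB, mul_rimp, rimp_self]

lemma ph_rimp_one (x : A) : rimp (1:A) x = x := by
  apply ph_antisymm
  · rw [ph_B, mul_rimp, rimp_self]; exact ph_ff x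
  · rw [← mul_rimp, mul_one', rimp_self]

lemma ph_rimp_top (x : A) : rimp x (1:A) = 1 := by
  have hh := ph_B x
  rw [ph_rimp_one] at hh
  conv_lhs => rw [hh]
  rw [mul_rimp, rimp_self]

lemma ph_limp_one (x : A) : limp (1:A) x = x := by
  have hd := div₂ 1 x
  rw [mul_one', one_mul', ph_rimp_one] at hd
  exact hd.symm

lemma ph_limp_top (x : A) : limp x (1:A) = 1 := by
  have hh := div₃ 1 x
  rw [one_mul', ph_limp_one] at hh
  conv_lhs => rw [hh]
  rw [mul_limp, limp_self]

lemma ph_decomp {x y : A} (h : rimp x y = 1) : x = y * limp y x := by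
  have d2 := div₂ x y
  rw [h, one_mul'] at d2
  exact d2.trans (div₃ x y)

lemma ph_r_to_l {x y : A} (h : rimp x y = 1) : limp x y = 1 := by
  have hd := ph_decomp h
  conv_lhs => rw [hd]
  rw [mul_limp, limp_self, ph_limp_top]

lemma ph_l_to_r {x y : A} (h : limp x y = 1) : rimp x y = 1 := by
  have d2 := div₂ x y
  rw [h, mul_one'] at d2
  have hx := d2.symm.trans (div₁ x y)
  conv_lhs => rw [hx]
  rw [mul_rimp, rimp_self, ph_rimp_top]

lemma ph_trans {x y z : A} (hxy : rimp x y = 1) (hyz : rimp y z = 1) : rimp x z = 1 := by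
  have hx := ph_decomp hxy
  have hy := ph_decomp hyz
  have hx2 : x = (z * limp z y) * limp y x := by rw [← hy]; exact hx
  have key : rimp (z * (limp z y * limp y x)) z = 1 := by
    apply ph_l_to_r; rw [mul_limp, limp_self, ph_limp_top]
  rw [mul_rimp, mul_rimp] at key
  conv_lhs => rw [hx2]
  rw [mul_rimp, mul_rimp]
  exact key

lemma ph_le_mul_right (a b : A) : rimp (a*b) b = 1 := by
  rw [mul_rimp, rimp_self, ph_rimp_top]

lemma ph_rimp_mul (x y : A) : rimp ((rimp x y)*x) y = 1 := by
  rw [mul_rimp, rimp_self]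

lemma ph_limp_mul (x y : A) : rimp (x*(limp x y)) y = 1 := by
  apply ph_l_to_r; rw [mul_limp, limp_self]

lemma ph_res_l {x y z : A} : rimp (x*y) z = 1 ↔ rimp y (limp x z) = 1 := by
  constructor
  · intro hh
    apply ph_l_to_r
    have h2 := ph_r_to_l hh
    rw [mul_limp] at h2
    exact h2
  · intro hh
    apply ph_l_to_r
    rw [mul_limp]
    exact ph_r_to_l hh

lemma ph_mono_mul_right {a b : A} (h : rimp a b = 1) (x : A) : rimp (x*a) (x*b) = 1 := by
  apply ph_res_l.mpr
  exact ph_trans h (ph_res_l.mp (rimp_self (x*b)))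

lemma ph_mono_mul_left {a b : A} (h : rimp a b = 1) (x : A) : rimp (a*x) (b*x) = 1 := by
  rw [mul_rimp]
  exact ph_trans h (by rw [← mul_rimp, rimp_self])

lemma ph_anti_rimp {a b : A} (h : rimp a b = 1) (z : A) :
    rimp (rimp b z) (rimp a z) = 1 := by
  rw [← mul_rimp]
  exact ph_trans (ph_mono_mul_right h _) (ph_rimp_mul b z)

lemma ph_anti_limp {a b : A} (h : rimp a b = 1) (z : A) :
    rimp (limp b z) (limp a z) = 1 := by
  apply ph_res_l.mp
  exact ph_trans (ph_mono_mul_left h _) (ph_limp_mul b z)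

lemma ph_mono_limp {a b : A} (h : rimp a b = 1) (x : A) :
    rimp (limp x a) (limp x b) = 1 := by
  apply ph_res_l.mp
  exact ph_trans (ph_limp_mul x a) h

lemma ph_meet_le_left (x y : A) : rimp (meet x y) x = 1 := by
  show rimp ((rimp x y) * x) x = 1
  exact ph_le_mul_right _ _

lemma ph_meet_le_right (x y : A) : rimp (meet x y) y = 1 := by
  show rimp ((rimp x y) * x) y = 1
  exact ph_rimp_mul x y

lemma ph_le_meet {x y z : A} (hx : rimp z x = 1) (hy : rimp z y = 1) :
    rimp z (meet x y) = 1 := by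
  have hd := ph_decomp hx
  rw [show meet x y = x * limp x y from div₂ x y]
  conv_lhs => rw [hd]
  exact ph_mono_mul_right (ph_mono_limp hy x) x

lemma ph_le_join_right (x y : A) : rimp y (join₁ x y) = 1 := by
  apply ph_l_to_r
  show limp y (limp (rimp x y) y) = 1
  rw [← mul_limp]
  apply ph_r_to_l
  rw [mul_rimp, rimp_self, ph_rimp_top]

lemma ph_le_join_left (h : IsWajsberg A) (x y : A) : rimp x (join₁ x y) = 1 := by
  rw [(h x y).1]
  exact ph_le_join_right y x

lemma ph_join_le (h : IsWajsberg A) {x y u : A} (hx : rimp x u = 1) (hy : rimp y u = 1) :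
    rimp (join₁ x y) u = 1 := by
  have h2 : join₁ y u = u := by unfold join₁; rw [hy, ph_limp_one]
  have hu : limp (rimp u y) y = u := ((h u y).1).trans h2
  have h3 : rimp (rimp u y) (rimp x y) = 1 := ph_anti_rimp hx y
  have h4 := ph_anti_limp h3 y
  rw [hu] at h4
  exact h4

end AuxLemmas

theorem stmt5 {A : Type u} [PseudoHoop A] (h : IsWajsberg A) (x y z : A) :
    rimp (join₁ x y) z = meet (rimp x z) (rimp y z) ∧
    limp (join₁ x y) z = meet (limp x z) (limp y z) := by
  constructor
  · apply ph_antisymm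
    · exact ph_le_meet (ph_anti_rimp (ph_le_join_left h x y) z)
        (ph_anti_rimp (ph_le_join_right x y) z)
    · rw [← mul_rimp]
      apply ph_res_l.mpr
      apply ph_join_le h
      · apply ph_res_l.mp
        rw [mul_rimp]
        exact ph_meet_le_left _ _
      · apply ph_res_l.mp
        rw [mul_rimp]
        exact ph_meet_le_right _ _
  · apply ph_antisymm
    · exact ph_le_meet (ph_anti_limp (ph_le_join_left h x y) z)
        (ph_anti_limp (ph_le_join_right x y) z)
    · apply ph_res_l.mp
      rw [mul_rimp]
      apply ph_join_le h
      · rw [← mul_rimp]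
        exact ph_res_l.mpr (ph_meet_le_left _ _)
      · rw [← mul_rimp]
        exact ph_res_l.mpr (ph_meet_le_right _ _)
end

section
/- If A is a good bounded pseudo-hoop, then the set Den(A) = {x ∈ A : x^{-∼} = 1} of dense elements is a normal involutive filter of A. -/
universe u v

open PseudoHoop

open BoundedPseudoHoop

section Aux

open PseudoHoop

variable {A : Type u} [BoundedPseudoHoop A]

lemma aux_antisymm {x y : A} (h1 : ple x y) (h2 : ple y x) : x = y := by
  have e1 : rimp x y = 1 := h1
  have e2 : rimp y x = 1 := h2
  have hd := div₁ x y
  rw [e1, e2, one_mul', one_mul'] at hd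
  exact hd

lemma aux_refl (x : A) : ple x x := rimp_self x

lemma aux_rimp_one_rimp (x y : A) : rimp 1 (rimp x y) = rimp x y := by
  have h := mul_rimp 1 x y
  rw [one_mul'] at h
  exact h.symm

lemma aux_le_one_rimp (x : A) : rimp x (rimp 1 x) = 1 := by
  have h := rimp_self (x * 1)
  rw [mul_rimp, mul_one'] at h
  exact h

lemma aux_one_rimp_le_one (x : A) : rimp (rimp 1 x) 1 = 1 := by
  have hd := div₁ x 1
  rw [mul_one'] at hd
  rw [← hd, mul_rimp, rimp_self]

lemma aux_one_rimp (x : A) : rimp 1 x = x := by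
  have h2 : rimp (rimp 1 x) x = 1 := by
    have hd := div₁ x 1
    rw [mul_one'] at hd
    rw [← hd, mul_rimp, rimp_self]
    rw [(aux_rimp_one_rimp x 1).symm]
    exact aux_one_rimp_le_one (rimp x 1)
  exact aux_antisymm h2 (aux_le_one_rimp x)

lemma aux_rimp_one (x : A) : rimp x 1 = 1 := by
  have h := aux_one_rimp_le_one x
  rw [aux_one_rimp] at h
  exact h

lemma aux_one_limp (x : A) : limp 1 x = x := by
  have hd := div₂ 1 x
  rw [mul_one', one_mul', aux_one_rimp] at hd
  exact hd.symm

lemma aux_limp_one (x : A) : limp x 1 = 1 := by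
  have hd := div₃ x 1
  rw [one_mul', aux_one_limp] at hd
  have h2 := mul_limp x (limp x 1) 1
  rw [hd, limp_self] at h2
  exact h2

lemma aux_le_iff {x y : A} : ple x y ↔ limp x y = 1 := by
  constructor
  · intro h
    have h' : rimp x y = 1 := h
    have h1 := div₂ x y
    rw [h', one_mul'] at h1
    have h2 := div₃ x y
    rw [← h1] at h2
    have h3 := mul_limp y (limp y x) y
    rw [← h2, limp_self, aux_limp_one] at h3
    exact h3
  · intro h
    have h1 := div₂ x y
    rw [h, mul_one'] at h1
    have h2 := div₁ x y
    rw [h1] at h2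
    have h3 := mul_rimp (rimp y x) y y
    rw [← h2, rimp_self, aux_rimp_one] at h3
    exact h3

lemma aux_trans {x y z : A} (h1 : ple x y) (h2 : ple y z) : ple x z := by
  have h1' : rimp x y = 1 := h1
  have h2' : rimp y z = 1 := h2
  have ha := div₁ x y
  rw [h1', one_mul'] at ha
  show rimp x z = 1
  rw [ha, mul_rimp, h2', aux_rimp_one]

lemma aux_resid_r {x y z : A} : ple (x * y) z ↔ ple x (rimp y z) := by
  constructor
  · intro h
    show rimp x (rimp y z) = 1
    rw [← mul_rimp]
    exact h
  · intro h
    show rimp (x * y) z = 1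
    rw [mul_rimp]
    exact h

lemma aux_resid_l {x y z : A} : ple (x * y) z ↔ ple y (limp x z) := by
  rw [aux_le_iff, aux_le_iff, mul_limp]

lemma aux_mul_le_left (x y : A) : ple (x * y) x := by
  rw [aux_le_iff, mul_limp, limp_self, aux_limp_one]

lemma aux_mul_le_right (x y : A) : ple (x * y) y := by
  show rimp (x * y) y = 1
  rw [mul_rimp, rimp_self, aux_rimp_one]

lemma aux_rimp_mul_le (x y : A) : ple (rimp x y * x) y :=
  aux_resid_r.mpr (aux_refl _)

lemma aux_mul_limp_le (x y : A) : ple (x * limp x y) y :=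
  aux_resid_l.mpr (aux_refl _)

lemma aux_mul_le_mul_left {u v : A} (c : A) (h : ple u v) : ple (c * u) (c * v) :=
  aux_resid_l.mpr (aux_trans h (aux_resid_l.mp (aux_refl (c * v))))

lemma aux_mul_le_mul_right {u v : A} (c : A) (h : ple u v) : ple (u * c) (v * c) :=
  aux_resid_r.mpr (aux_trans h (aux_resid_r.mp (aux_refl (v * c))))

lemma aux_rimp_antitone {x y : A} (z : A) (h : ple x y) : ple (rimp y z) (rimp x z) :=
  aux_resid_r.mp (aux_trans (aux_mul_le_mul_left _ h) (aux_rimp_mul_le _ _))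

lemma aux_limp_antitone {x y : A} (z : A) (h : ple x y) : ple (limp y z) (limp x z) :=
  aux_resid_l.mp (aux_trans (aux_mul_le_mul_right _ h) (aux_mul_limp_le _ _))

lemma aux_mul_assoc (x y z : A) : x * y * z = x * (y * z) := by
  have key : ∀ w : A, rimp (x * y * z) w = rimp (x * (y * z)) w := by
    intro w
    rw [mul_rimp, mul_rimp, mul_rimp, mul_rimp]
  refine aux_antisymm ?_ ?_
  · show rimp (x * y * z) (x * (y * z)) = 1
    rw [key]
    exact rimp_self _
  · show rimp (x * (y * z)) (x * y * z) = 1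
    rw [← key]
    exact rimp_self _

lemma aux_le_zero {x : A} (h : ple x 0) : x = 0 :=
  aux_antisymm h (BoundedPseudoHoop.zero_le x)

lemma aux_negr_mul (x : A) : rimp x 0 * x = 0 := by
  have hd := div₁ x 0
  rw [BoundedPseudoHoop.zero_le, one_mul'] at hd
  exact hd

lemma aux_mul_negl (x : A) : x * limp x 0 = 0 := by
  have hz : limp (0 : A) x = 1 := aux_le_iff.mp (BoundedPseudoHoop.zero_le x)
  have hd := div₃ x 0
  rw [hz, mul_one'] at hd
  exact hd

lemma aux_le_dnr (x : A) : ple x (limp (rimp x 0) 0) := by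
  have t : ple (rimp x 0 * x) 0 := by
    rw [aux_negr_mul]
    exact aux_refl 0
  exact aux_resid_l.mp t

lemma aux_le_dnl (x : A) : ple x (rimp (limp x 0) 0) := by
  have t : ple (x * limp x 0) 0 := by
    rw [aux_mul_negl]
    exact aux_refl 0
  exact aux_resid_r.mp t

lemma aux_tneg_r_raw (x : A) : rimp (limp (rimp x 0) 0) 0 = rimp x 0 :=
  aux_antisymm (aux_rimp_antitone 0 (aux_le_dnr x)) (aux_le_dnl (rimp x 0))

lemma aux_tneg_l_raw (x : A) : limp (rimp (limp x 0) 0) 0 = limp x 0 :=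
  aux_antisymm (aux_limp_antitone 0 (aux_le_dnl x)) (aux_le_dnr (limp x 0))

lemma aux_div_of_le {u v : A} (h : ple u v) : v * limp v u = u := by
  have h' : limp u v = 1 := aux_le_iff.mp h
  have hd := div₃ v u
  rw [h', mul_one'] at hd
  exact hd

lemma aux_div_of_le' {u v : A} (h : ple u v) : rimp v u * v = u := by
  have h' : rimp u v = 1 := h
  have hd := div₁ v u
  rw [h', one_mul'] at hd
  exact hd

lemma aux_key_r (x z : A) :
    ple (rimp x (limp z 0) * limp (rimp x 0) 0) (limp z 0) := by
  have h2 : ple (rimp x (limp z 0) * x) (limp z 0) := aux_rimp_mul_le x (limp z 0)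
  have h3 : ple (z * (rimp x (limp z 0) * x)) 0 := by
    have t := aux_mul_le_mul_left z h2
    rw [aux_mul_negl z] at t
    exact t
  have h3' : ple (z * rimp x (limp z 0) * x) 0 := by
    rw [aux_mul_assoc]
    exact h3
  have h4 : ple x (limp (z * rimp x (limp z 0)) 0) := aux_resid_l.mp h3'
  have h5 : ple (limp (rimp x 0) 0) (limp (z * rimp x (limp z 0)) 0) := by
    have t := aux_limp_antitone 0 (aux_rimp_antitone 0 h4)
    rw [aux_tneg_l_raw] at t
    exact t
  have h6 : ple (z * rimp x (limp z 0) * limp (rimp x 0) 0) 0 := aux_resid_l.mpr h5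
  have h7 : ple (z * (rimp x (limp z 0) * limp (rimp x 0) 0)) 0 := by
    rw [← aux_mul_assoc]
    exact h6
  exact aux_resid_l.mp h7

lemma aux_key_l (x z : A) :
    ple (rimp (limp x 0) 0 * limp x (rimp z 0)) (rimp z 0) := by
  have h2 : ple (x * limp x (rimp z 0)) (rimp z 0) := aux_mul_limp_le x (rimp z 0)
  have h3 : ple (x * limp x (rimp z 0) * z) 0 := by
    have t := aux_mul_le_mul_right z h2
    rw [aux_negr_mul z] at t
    exact t
  have h3' : ple (x * (limp x (rimp z 0) * z)) 0 := by
    rw [← aux_mul_assoc]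
    exact h3
  have h4 : ple x (rimp (limp x (rimp z 0) * z) 0) := aux_resid_r.mp h3'
  have h5 : ple (rimp (limp x 0) 0) (rimp (limp x (rimp z 0) * z) 0) := by
    have t := aux_rimp_antitone 0 (aux_limp_antitone 0 h4)
    rw [aux_tneg_r_raw] at t
    exact t
  have h6 : ple (rimp (limp x 0) 0 * (limp x (rimp z 0) * z)) 0 := aux_resid_r.mpr h5
  have h7 : ple (rimp (limp x 0) 0 * limp x (rimp z 0) * z) 0 := by
    rw [aux_mul_assoc]
    exact h6
  exact aux_resid_r.mp h7

lemma aux_dfix_negr_raw (hg' : ∀ w : A, limp (rimp w 0) 0 = rimp (limp w 0) 0) (w : A) :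
    limp (rimp (rimp w 0) 0) 0 = rimp w 0 := by
  rw [hg' (rimp w 0)]
  exact aux_tneg_r_raw w

lemma aux_dfix_negl_raw (hg' : ∀ w : A, limp (rimp w 0) 0 = rimp (limp w 0) 0) (w : A) :
    rimp (limp (limp w 0) 0) 0 = limp w 0 := by
  rw [← hg' (limp w 0)]
  exact aux_tneg_l_raw w

lemma aux_nilp {x z c : A} (hcz : c * z = x) (hzn : ple (z * limp x 0) 0)
    (hec : ple (limp c 0) z) : limp c 0 = 0 := by
  have h4 : z * limp z (limp c 0) = limp c 0 := aux_div_of_le hec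
  have h5 : ple (x * limp z (limp c 0)) 0 := by
    have heq : x * limp z (limp c 0) = c * (z * limp z (limp c 0)) := by
      rw [← aux_mul_assoc, hcz]
    rw [heq, h4, aux_mul_negl]
    exact aux_refl 0
  have h6 : ple (limp z (limp c 0)) (limp x 0) := aux_resid_l.mp h5
  have h7 : ple (z * limp z (limp c 0)) (z * limp x 0) := aux_mul_le_mul_left z h6
  rw [h4] at h7
  exact aux_le_zero (aux_trans h7 hzn)

lemma aux_nilp' {x z c : A} (hzc : z * c = x) (hzn : ple (rimp x 0 * z) 0)
    (hec : ple (rimp c 0) z) : rimp c 0 = 0 := by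
  have h4 : rimp z (rimp c 0) * z = rimp c 0 := aux_div_of_le' hec
  have h5 : ple (rimp z (rimp c 0) * x) 0 := by
    have heq : rimp z (rimp c 0) * x = rimp z (rimp c 0) * z * c := by
      rw [aux_mul_assoc, hzc]
    rw [heq, h4, aux_negr_mul]
    exact aux_refl 0
  have h6 : ple (rimp z (rimp c 0)) (rimp x 0) := aux_resid_r.mp h5
  have h7 : ple (rimp z (rimp c 0) * z) (rimp x 0 * z) := aux_mul_le_mul_right z h6
  rw [h4] at h7
  exact aux_le_zero (aux_trans h7 hzn)

lemma aux_inv_r (hg' : ∀ w : A, limp (rimp w 0) 0 = rimp (limp w 0) 0) (x : A) :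
    limp (rimp (limp (rimp x 0) 0) x) 0 = 0 := by
  refine aux_nilp (x := x) (z := limp (rimp x 0) 0) ?_ ?_ ?_
  · have hxz : rimp x (limp (rimp x 0) 0) = 1 := aux_le_dnr x
    have hd := div₁ (limp (rimp x 0) 0) x
    rw [hxz, one_mul'] at hd
    exact hd
  · rw [hg' x, aux_negr_mul]
    exact aux_refl 0
  · apply aux_limp_antitone
    refine aux_resid_r.mp ?_
    rw [aux_mul_negl]
    exact BoundedPseudoHoop.zero_le x

lemma aux_inv_l (hg' : ∀ w : A, limp (rimp w 0) 0 = rimp (limp w 0) 0) (x : A) :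
    rimp (limp (rimp (limp x 0) 0) x) 0 = 0 := by
  refine aux_nilp' (x := x) (z := rimp (limp x 0) 0) ?_ ?_ ?_
  · have hxz : limp x (rimp (limp x 0) 0) = 1 := aux_le_iff.mp (aux_le_dnl x)
    have hd := div₃ (rimp (limp x 0) 0) x
    rw [hxz, mul_one'] at hd
    exact hd
  · rw [← hg' x, aux_mul_negl]
    exact aux_refl 0
  · apply aux_rimp_antitone
    refine aux_resid_l.mp ?_
    rw [aux_negr_mul]
    exact BoundedPseudoHoop.zero_le x

lemma aux_norm_r (hg' : ∀ w : A, limp (rimp w 0) 0 = rimp (limp w 0) 0) {x y : A}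
    (h : limp (rimp (rimp x y) 0) 0 = 1) : ple (rimp y 0) (rimp x 0) := by
  have s1 : ple (rimp x y * x) y := aux_rimp_mul_le x y
  have s2 := aux_mul_le_mul_left (rimp y 0) s1
  rw [aux_negr_mul y] at s2
  rw [← aux_mul_assoc] at s2
  have s3 : ple (rimp y 0 * rimp x y) (rimp x 0) := aux_resid_r.mp s2
  have s4 : ple (rimp y 0) (rimp (rimp x y) (rimp x 0)) := aux_resid_r.mp s3
  have k := aux_key_r (rimp x y) (rimp (rimp x 0) 0)
  rw [aux_dfix_negr_raw hg' x] at k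
  rw [h, mul_one'] at k
  exact aux_trans s4 k

lemma aux_norm_l (hg' : ∀ w : A, limp (rimp w 0) 0 = rimp (limp w 0) 0) {x y : A}
    (h : limp (rimp (limp x y) 0) 0 = 1) : ple (limp y 0) (limp x 0) := by
  have s1 : ple (x * limp x y) y := aux_mul_limp_le x y
  have s2 := aux_mul_le_mul_right (limp y 0) s1
  rw [aux_mul_negl y] at s2
  rw [aux_mul_assoc] at s2
  have s3 : ple (limp x y * limp y 0) (limp x 0) := aux_resid_l.mp s2
  have s4 : ple (limp y 0) (limp (limp x y) (limp x 0)) := aux_resid_l.mp s3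
  have k := aux_key_l (limp x y) (limp (limp x 0) 0)
  rw [aux_dfix_negl_raw hg' x] at k
  have hD : rimp (limp (limp x y) 0) 0 = 1 := by
    rw [← hg' (limp x y)]
    exact h
  rw [hD, one_mul'] at k
  exact aux_trans s4 k

lemma aux_mem_of {x : A} (h : rimp x 0 = 0) : x ∈ Den A := by
  show limp (rimp x 0) 0 = 1
  rw [h]
  exact limp_self 0

lemma aux_negr_of_mem {x : A} (h : x ∈ Den A) : rimp x 0 = 0 := by
  have h' : limp (rimp x 0) 0 = 1 := h
  exact aux_le_zero (aux_le_iff.mpr h')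

lemma aux_mem_of_negl (hg' : ∀ w : A, limp (rimp w 0) 0 = rimp (limp w 0) 0)
    {x : A} (h : limp x 0 = 0) : x ∈ Den A := by
  show limp (rimp x 0) 0 = 1
  rw [hg' x, h]
  exact rimp_self 0

lemma aux_upward {x y : A} (hx : x ∈ Den A) (hxy : ple x y) : y ∈ Den A := by
  apply aux_mem_of
  have h1 : ple (rimp y 0) (rimp x 0) := aux_rimp_antitone 0 hxy
  rw [aux_negr_of_mem hx] at h1
  exact aux_le_zero h1

end Aux

theorem stmt9 {A : Type u} [BoundedPseudoHoop A] (hg : IsGood A) :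
    IsNormalFilter (Den A) ∧ IsInvolutiveFilter (Den A) := by
  have hg' : ∀ w : A, limp (rimp w 0) 0 = rimp (limp w 0) 0 := hg
  have filt : IsFilter (Den A) := by
    refine ⟨⟨1, ?_⟩, ?_, ?_⟩
    · exact aux_mem_of (aux_one_rimp 0)
    · intro x y hx hy
      apply aux_mem_of
      rw [mul_rimp, aux_negr_of_mem hy]
      exact aux_negr_of_mem hx
    · intro x y hx hxy
      exact aux_upward hx hxy
  refine ⟨⟨filt, fun x y => ⟨?_, ?_⟩⟩, filt, fun x => ⟨?_, ?_⟩⟩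
  · -- rimp x y ∈ Den → limp x y ∈ Den
    intro h
    have hm : limp (rimp (rimp x y) 0) 0 = 1 := h
    have n1 := aux_norm_r hg' hm
    have hxDy : ple x (limp (rimp y 0) 0) :=
      aux_trans (aux_le_dnr x) (aux_limp_antitone 0 n1)
    have h0 := aux_inv_l hg' y
    rw [← hg' y] at h0
    have hdm : limp (limp (rimp y 0) 0) y ∈ Den A := aux_mem_of h0
    have hDyd : limp (rimp y 0) 0 * limp (limp (rimp y 0) 0) y = y :=
      aux_div_of_le (aux_le_dnr y)
    have t : ple (x * limp (limp (rimp y 0) 0) y) y := by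
      have t1 := aux_mul_le_mul_right (limp (limp (rimp y 0) 0) y) hxDy
      rw [hDyd] at t1
      exact t1
    exact aux_upward hdm (aux_resid_l.mp t)
  · -- limp x y ∈ Den → rimp x y ∈ Den
    intro h
    have hm : limp (rimp (limp x y) 0) 0 = 1 := h
    have n2 := aux_norm_l hg' hm
    have hxDy : ple x (rimp (limp y 0) 0) :=
      aux_trans (aux_le_dnl x) (aux_rimp_antitone 0 n2)
    have h0 := aux_inv_r hg' y
    rw [hg' y] at h0
    have hdm : rimp (rimp (limp y 0) 0) y ∈ Den A := aux_mem_of_negl hg' h0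
    have hDyd : rimp (rimp (limp y 0) 0) y * rimp (limp y 0) 0 = y :=
      aux_div_of_le' (aux_le_dnl y)
    have t : ple (rimp (rimp (limp y 0) 0) y * x) y := by
      have t1 := aux_mul_le_mul_left (rimp (rimp (limp y 0) 0) y) hxDy
      rw [hDyd] at t1
      exact t1
    exact aux_upward hdm (aux_resid_r.mp t)
  · exact aux_mem_of_negl hg' (aux_inv_r hg' x)
  · exact aux_mem_of (aux_inv_l hg' x)
end
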